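/- Let (g, [,]) be a Lie algebra and (A, μ, δ) a commutative Frobenius algebra (associative commutative product μ, coassociative cocommutative coproduct δ satisfying the Frobenius relation δ∘μ = (μ⊗id)∘(id⊗δ)) over a field of characteristic 0. Then g ⊗ A with bracket [x⊗a, y⊗b] = [x,y] ⊗ μ(a,b) is a Lie algebra, and if moreover g carries a Lie cobracket ν: g → g⊗g making it a Lie bialgebra, then g ⊗ A with bracket as above and cobracket (ν ⊗ δ) (with middle swap) satisfies the Lie bialgebra cocycle condition. -/
import Mathlib


open TensorProduct LinearMap

section Defs

variable (K M : Type*) [Field K] [AddCommGroup M] [Module K M]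

/-- A Lie bracket on `M`, written in tensor form: antisymmetry and the Jacobi
identity `[[x,y],z] = [x,[y,z]] - [y,[x,z]]`. -/
def IsLieTensor (b : M ⊗[K] M →ₗ[K] M) : Prop :=
  (b ∘ₗ (TensorProduct.comm K M M).toLinearMap = -b) ∧
  (b ∘ₗ rTensor M b =
    b ∘ₗ lTensor M b ∘ₗ (TensorProduct.assoc K M M M).toLinearMap -
    b ∘ₗ lTensor M b ∘ₗ (TensorProduct.assoc K M M M).toLinearMap ∘ₗ
      rTensor M (TensorProduct.comm K M M).toLinearMap)

/-- The cyclic rotation `x⊗y⊗z ↦ z⊗x⊗y` on `(M⊗M)⊗M`. -/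
noncomputable def cyclicRot : (M ⊗[K] M) ⊗[K] M →ₗ[K] (M ⊗[K] M) ⊗[K] M :=
  (TensorProduct.assoc K M M M).symm.toLinearMap ∘ₗ
    (TensorProduct.comm K (M ⊗[K] M) M).toLinearMap

/-- A Lie cobracket on `M`: co-antisymmetry and the co-Jacobi identity
`(1 + ζ + ζ²)∘(ν ⊗ id)∘ν = 0`. -/
noncomputable def IsLieCobracketT (ν : M →ₗ[K] M ⊗[K] M) : Prop :=
  ((TensorProduct.comm K M M).toLinearMap ∘ₗ ν = -ν) ∧
  (rTensor M ν ∘ₗ ν + cyclicRot K M ∘ₗ (rTensor M ν ∘ₗ ν) +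
    cyclicRot K M ∘ₗ (cyclicRot K M ∘ₗ (rTensor M ν ∘ₗ ν)) = 0)

/-- The adjoint action `x ⊗ (u ⊗ v) ↦ [x,u]⊗v + u⊗[x,v]` of `M` on `M ⊗ M`
associated to a bracket `b`. -/
noncomputable def adAct (b : M ⊗[K] M →ₗ[K] M) :
    M ⊗[K] (M ⊗[K] M) →ₗ[K] M ⊗[K] M :=
  rTensor M b ∘ₗ (TensorProduct.assoc K M M M).symm.toLinearMap +
  lTensor M b ∘ₗ (TensorProduct.assoc K M M M).toLinearMap ∘ₗ
    rTensor M (TensorProduct.comm K M M).toLinearMap ∘ₗ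
    (TensorProduct.assoc K M M M).symm.toLinearMap

/-- The Lie bialgebra cocycle condition
`ν([x,y]) = x·ν(y) - y·ν(x)` for a bracket `b` and cobracket `ν`. -/
noncomputable def IsLieBialgCocycle (b : M ⊗[K] M →ₗ[K] M)
    (ν : M →ₗ[K] M ⊗[K] M) : Prop :=
  ν ∘ₗ b = adAct K M b ∘ₗ lTensor M ν -
    adAct K M b ∘ₗ lTensor M ν ∘ₗ (TensorProduct.comm K M M).toLinearMap

/-- Frobenius structure (as in statement 13). -/
def IsFrobeniusT (μ : M ⊗[K] M →ₗ[K] M) (δ : M →ₗ[K] M ⊗[K] M) : Prop :=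
  (μ ∘ₗ rTensor M μ = μ ∘ₗ lTensor M μ ∘ₗ (TensorProduct.assoc K M M M).toLinearMap) ∧
  (μ ∘ₗ (TensorProduct.comm K M M).toLinearMap = μ) ∧
  ((TensorProduct.assoc K M M M).toLinearMap ∘ₗ rTensor M δ ∘ₗ δ = lTensor M δ ∘ₗ δ) ∧
  ((TensorProduct.comm K M M).toLinearMap ∘ₗ δ = δ) ∧
  (δ ∘ₗ μ = rTensor M μ ∘ₗ (TensorProduct.assoc K M M M).symm.toLinearMap ∘ₗ lTensor M δ)

end Defs

lemma adAct_tmul {K M : Type*} [Field K] [AddCommGroup M] [Module K M]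
    (b : M ⊗[K] M →ₗ[K] M) (x u v : M) :
    adAct K M b (x ⊗ₜ[K] (u ⊗ₜ[K] v)) = b (x ⊗ₜ[K] u) ⊗ₜ[K] v + u ⊗ₜ[K] b (x ⊗ₜ[K] v) := by
  simp [adAct]

/-- if `(g, br)` is a Lie algebra and `(A, μ, δ)` a commutative
Frobenius algebra, then `g ⊗ A` with bracket `[x⊗a, y⊗b] = [x,y] ⊗ μ(a,b)` is
a Lie algebra; if moreover `ν` makes `g` a Lie bialgebra, then `g ⊗ A` with
cobracket `(ν ⊗ δ)` (middle swap) satisfies the Lie bialgebra cocycle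
condition. -/
theorem stmt14 {K g A : Type*} [Field K] [CharZero K]
    [AddCommGroup g] [Module K g] [AddCommGroup A] [Module K A]
    (br : g ⊗[K] g →ₗ[K] g) (ν : g →ₗ[K] g ⊗[K] g)
    (μ : A ⊗[K] A →ₗ[K] A) (δ : A →ₗ[K] A ⊗[K] A)
    (hLie : IsLieTensor K g br)
    (hFrob : IsFrobeniusT K A μ δ)
    (hco : IsLieCobracketT K g ν)
    (hcocycle : IsLieBialgCocycle K g br ν) :
    IsLieTensor K (g ⊗[K] A)
      (TensorProduct.map br μ ∘ₗ
        (TensorProduct.tensorTensorTensorComm K g A g A).toLinearMap) ∧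
    IsLieBialgCocycle K (g ⊗[K] A)
      (TensorProduct.map br μ ∘ₗ
        (TensorProduct.tensorTensorTensorComm K g A g A).toLinearMap)
      ((TensorProduct.tensorTensorTensorComm K g A g A).symm.toLinearMap ∘ₗ
        TensorProduct.map ν δ) := by
  obtain ⟨hanti, hjacM⟩ := hLie
  obtain ⟨hassoc, hcommM, hcoassoc, hcocommM, hfrobM⟩ := hFrob
  -- pointwise versions of the hypotheses
  have hba : ∀ x y : g, br (y ⊗ₜ[K] x) = - br (x ⊗ₜ[K] y) := by
    intro x y; simpa using LinearMap.congr_fun hanti (x ⊗ₜ[K] y)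
  have hj : ∀ x y z : g, br (br (x ⊗ₜ[K] y) ⊗ₜ[K] z)
      = br (x ⊗ₜ[K] br (y ⊗ₜ[K] z)) - br (y ⊗ₜ[K] br (x ⊗ₜ[K] z)) := by
    intro x y z; simpa using LinearMap.congr_fun hjacM ((x ⊗ₜ[K] y) ⊗ₜ[K] z)
  have hma : ∀ a b c : A, μ (μ (a ⊗ₜ[K] b) ⊗ₜ[K] c) = μ (a ⊗ₜ[K] μ (b ⊗ₜ[K] c)) := by
    intro a b c; simpa using LinearMap.congr_fun hassoc ((a ⊗ₜ[K] b) ⊗ₜ[K] c)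
  have hmc : ∀ a b : A, μ (b ⊗ₜ[K] a) = μ (a ⊗ₜ[K] b) := by
    intro a b; simpa using LinearMap.congr_fun hcommM (a ⊗ₜ[K] b)
  have hdc : ∀ a : A, (TensorProduct.comm K A A) (δ a) = δ a := by
    intro a; simpa using LinearMap.congr_fun hcocommM a
  have hf1 : ∀ a b : A, δ (μ (a ⊗ₜ[K] b)) =
      rTensor A μ ((TensorProduct.assoc K A A A).symm (a ⊗ₜ[K] δ b)) := by
    intro a b; simpa using LinearMap.congr_fun hfrobM (a ⊗ₜ[K] b)
  have hc : ∀ x y : g, ν (br (x ⊗ₜ[K] y)) =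
      adAct K g br (x ⊗ₜ[K] ν y) - adAct K g br (y ⊗ₜ[K] ν x) := by
    intro x y; simpa using LinearMap.congr_fun hcocycle (x ⊗ₜ[K] y)
  -- second form of the Frobenius relation, via cocommutativity
  have hRa : ∀ (a : A) (q : A ⊗[K] A),
      lTensor A μ ((TensorProduct.assoc K A A A)
        (rTensor A (TensorProduct.comm K A A).toLinearMap
          ((TensorProduct.assoc K A A A).symm (a ⊗ₜ[K] q)))) =
      (TensorProduct.comm K A A) (rTensor A μ ((TensorProduct.assoc K A A A).symm
        (a ⊗ₜ[K] (TensorProduct.comm K A A) q))) := by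
    intro a q
    induction q using TensorProduct.induction_on with
    | zero => simp
    | tmul s t => simp
    | add p q hp hq => simp [tmul_add, hp, hq]
  have hf2 : ∀ a b : A, δ (μ (a ⊗ₜ[K] b)) =
      lTensor A μ ((TensorProduct.assoc K A A A)
        (rTensor A (TensorProduct.comm K A A).toLinearMap
          ((TensorProduct.assoc K A A A).symm (a ⊗ₜ[K] δ b)))) := by
    intro a b
    rw [hRa, hdc, ← hf1, hdc]
  constructor
  · constructor
    · ext x a y b
      simp only [LinearMap.comp_apply, LinearEquiv.coe_coe, AlgebraTensorModule.curry_apply,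
        curry_apply, LinearMap.coe_restrictScalars, comm_tmul, tensorTensorTensorComm_tmul,
        TensorProduct.map_tmul, LinearMap.neg_apply]
      rw [hba, hmc, neg_tmul]
    · ext x a y b z c
      simp only [LinearMap.comp_apply, LinearEquiv.coe_coe, AlgebraTensorModule.curry_apply,
        curry_apply, LinearMap.coe_restrictScalars, comm_tmul, tensorTensorTensorComm_tmul,
        TensorProduct.map_tmul, rTensor_tmul, lTensor_tmul, assoc_tmul,
        LinearMap.sub_apply]
      rw [show μ (b ⊗ₜ[K] μ (a ⊗ₜ[K] c)) = μ (μ (a ⊗ₜ[K] b) ⊗ₜ[K] c) by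
            rw [← hma, hmc a b],
          show μ (a ⊗ₜ[K] μ (b ⊗ₜ[K] c)) = μ (μ (a ⊗ₜ[K] b) ⊗ₜ[K] c) from (hma a b c).symm,
          hj, sub_tmul]
  · -- the key lemma on the adjoint action of the tensor bracket
    have keyA : ∀ (x : g) (a : A) (p : g ⊗[K] g) (b : A),
        adAct K (g ⊗[K] A)
          (TensorProduct.map br μ ∘ₗ
            (TensorProduct.tensorTensorTensorComm K g A g A).toLinearMap)
          ((x ⊗ₜ[K] a) ⊗ₜ[K]
            (TensorProduct.tensorTensorTensorComm K g A g A).symm (p ⊗ₜ[K] δ b)) =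
        (TensorProduct.tensorTensorTensorComm K g A g A).symm
          (adAct K g br (x ⊗ₜ[K] p) ⊗ₜ[K] δ (μ (a ⊗ₜ[K] b))) := by
      intro x a p b
      induction p using TensorProduct.induction_on with
      | zero => simp
      | add p₁ p₂ h₁ h₂ =>
          simp only [add_tmul, tmul_add, map_add, h₁, h₂]
      | tmul u v =>
          rw [show adAct K g br (x ⊗ₜ[K] (u ⊗ₜ[K] v)) =
              br (x ⊗ₜ[K] u) ⊗ₜ[K] v + u ⊗ₜ[K] br (x ⊗ₜ[K] v) from adAct_tmul br x u v,
            add_tmul, map_add]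
          nth_rewrite 1 [hf1]
          rw [hf2]
          generalize δ b = q
          induction q using TensorProduct.induction_on with
          | zero => simp
          | tmul s t =>
              simp [tensorTensorTensorComm_symm, tensorTensorTensorComm_tmul, adAct_tmul,
                LinearMap.comp_apply, LinearEquiv.coe_coe, TensorProduct.map_tmul,
                comm_tmul, assoc_tmul, assoc_symm_tmul, rTensor_tmul, lTensor_tmul]
          | add q₁ q₂ h₁ h₂ =>
              simp only [tmul_add, map_add, h₁, h₂]
              abel
    ext x a y b
    simp only [LinearMap.comp_apply, LinearEquiv.coe_coe, AlgebraTensorModule.curry_apply,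
      curry_apply, LinearMap.coe_restrictScalars, comm_tmul, tensorTensorTensorComm_tmul,
      TensorProduct.map_tmul, lTensor_tmul, LinearMap.sub_apply]
    rw [keyA, keyA, hc, show μ (b ⊗ₜ[K] a) = μ (a ⊗ₜ[K] b) from hmc a b, sub_tmul, map_sub]
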